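/- Let a, d be complex numbers with d ≠ 0 and let N be a positive integer. For every integer n ≥ 4, the sum of (n−1)-st powers of the arithmetic progression a, a+d, …, a+(N−1)d satisfies ∑_{r=1}^{N} (a + (r−1)·d)^{n−1} = (1/(n·d)) · S^{n−3}_n. -/

import Mathlib

open Finset

/-- The quantities `S^j_n` from the paper: `S a d N j n` is `S^j_n`. -/
noncomputable def S (a d : ℂ) (N : ℕ) : ℕ → ℕ → ℂ
  | 0, m =>
      ((m : ℂ) / 2 - 1) * (N : ℂ) * d ^ m
        - ((m : ℂ) / 2) * d ^ (m - 2) * ((a + (N : ℂ) * d) ^ 2 - a ^ 2)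
        + (a + (N : ℂ) * d) ^ m - a ^ m
  | j + 1, n =>
      -(n.choose (j + 2) : ℂ) * (1 / ((j : ℂ) + 3)) * d ^ (n - j - 3)
          * S a d N j (j + 3)
        + S a d N j n

private lemma telescope (a d : ℂ) (N m : ℕ) :
    (a + (N : ℂ) * d) ^ m - a ^ m
      = ∑ k ∈ range m, (m.choose k : ℂ) * d ^ (m - k)
          * ∑ r ∈ range N, (a + (r : ℂ) * d) ^ k := by
  have h1 : ∀ r : ℕ, (a + ((r : ℂ) + 1) * d) ^ m - (a + (r : ℂ) * d) ^ m
      = ∑ k ∈ range m, (m.choose k : ℂ) * d ^ (m - k) * (a + (r : ℂ) * d) ^ k := by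
    intro r
    have h : a + ((r : ℂ) + 1) * d = (a + (r : ℂ) * d) + d := by ring
    rw [h, add_pow, Finset.sum_range_succ]
    simp only [Nat.choose_self, Nat.cast_one, Nat.sub_self, pow_zero, mul_one]
    rw [add_sub_cancel_right]
    exact Finset.sum_congr rfl fun k _ => by ring
  have h2 : (a + (N : ℂ) * d) ^ m - a ^ m
      = ∑ r ∈ range N, ((a + ((r : ℂ) + 1) * d) ^ m - (a + (r : ℂ) * d) ^ m) := by
    have h := Finset.sum_range_sub (fun r : ℕ => (a + (r : ℂ) * d) ^ m) N
    push_cast at h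
    simpa using h.symm
  rw [h2]
  rw [Finset.sum_congr rfl fun r _ => h1 r, Finset.sum_comm]
  exact Finset.sum_congr rfl fun k _ => by rw [Finset.mul_sum]

private lemma P_zero (a d : ℂ) (N : ℕ) :
    ∑ r ∈ range N, (a + (r : ℂ) * d) ^ 0 = (N : ℂ) := by simp

private lemma P_one (a d : ℂ) (N : ℕ) :
    (a + (N : ℂ) * d) ^ 2 - a ^ 2
      = d ^ 2 * N + 2 * d * ∑ r ∈ range N, (a + (r : ℂ) * d) ^ 1 := by
  have := telescope a d N 2
  rw [this]
  rw [Finset.sum_range_succ, Finset.sum_range_one]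
  simp [P_zero]

private lemma S_eq (a d : ℂ) (N : ℕ) :
    ∀ j n : ℕ, j + 2 ≤ n →
      S a d N j n = ∑ k ∈ Finset.Ico (j + 2) n,
        (n.choose k : ℂ) * d ^ (n - k) * ∑ r ∈ range N, (a + (r : ℂ) * d) ^ k := by
  intro j
  induction j with
  | zero =>
    intro n hn
    have h0 : (0:ℕ) < n := by omega
    have h1 : (1:ℕ) < n := by omega
    have hr : ∑ k ∈ range n, (n.choose k : ℂ) * d ^ (n - k)
          * ∑ r ∈ range N, (a + (r : ℂ) * d) ^ k
        = (n.choose 0 : ℂ) * d ^ (n - 0) * (∑ r ∈ range N, (a + (r : ℂ) * d) ^ 0)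
          + ((n.choose 1 : ℂ) * d ^ (n - 1) * ∑ r ∈ range N, (a + (r : ℂ) * d) ^ 1
          + ∑ k ∈ Finset.Ico 2 n, (n.choose k : ℂ) * d ^ (n - k)
              * ∑ r ∈ range N, (a + (r : ℂ) * d) ^ k) := by
      rw [Finset.range_eq_Ico, Finset.sum_eq_sum_Ico_succ_bot h0,
        Finset.sum_eq_sum_Ico_succ_bot h1]
    have ht := telescope a d N n
    rw [hr] at ht
    simp only [Nat.choose_zero_right, Nat.cast_one, Nat.sub_zero, one_mul,
      Nat.choose_one_right, P_zero] at ht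
    show ((n : ℂ) / 2 - 1) * (N : ℂ) * d ^ n
        - ((n : ℂ) / 2) * d ^ (n - 2) * ((a + (N : ℂ) * d) ^ 2 - a ^ 2)
        + (a + (N : ℂ) * d) ^ n - a ^ n = _
    rw [P_one a d N]
    have e2 : d ^ (n - 2) * d ^ 2 = d ^ n := by
      rw [← pow_add]; congr 1; omega
    have e1 : d ^ (n - 2) * d = d ^ (n - 1) := by
      rw [← pow_succ]; congr 1; omega
    have key : (a + (N : ℂ) * d) ^ n - a ^ n
        = d ^ n * N + (n : ℂ) * d ^ (n - 1) * (∑ r ∈ range N, (a + (r : ℂ) * d) ^ 1)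
          + ∑ k ∈ Finset.Ico 2 n, (n.choose k : ℂ) * d ^ (n - k)
              * ∑ r ∈ range N, (a + (r : ℂ) * d) ^ k := by
      rw [ht]; ring
    rw [show (a + (N : ℂ) * d) ^ n = a ^ n + (d ^ n * N
          + (n : ℂ) * d ^ (n - 1) * (∑ r ∈ range N, (a + (r : ℂ) * d) ^ 1)
          + ∑ k ∈ Finset.Ico 2 n, (n.choose k : ℂ) * d ^ (n - k)
              * ∑ r ∈ range N, (a + (r : ℂ) * d) ^ k) by
        linear_combination key]
    rw [← e1, ← e2]
    ring
  | succ j ih =>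
    intro n hn
    show -(n.choose (j + 2) : ℂ) * (1 / ((j : ℂ) + 3)) * d ^ (n - j - 3)
          * S a d N j (j + 3) + S a d N j n = _
    have hj3 : S a d N j (j + 3)
        = ((j : ℂ) + 3) * d * ∑ r ∈ range N, (a + (r : ℂ) * d) ^ (j + 2) := by
      rw [ih (j + 3) (by omega)]
      have : Finset.Ico (j + 2) (j + 3) = {j + 2} := by
        ext x; simp only [Finset.mem_Ico, Finset.mem_singleton]; omega
      rw [this, Finset.sum_singleton]
      have : ((j + 3).choose (j + 2) : ℂ) = (j : ℂ) + 3 := by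
        rw [show j + 3 = (j + 2) + 1 by omega, Nat.choose_succ_self_right]
        push_cast; ring
      rw [this, show j + 3 - (j + 2) = 1 by omega, pow_one]
    have hsn := ih n (by omega)
    have hsplit : ∑ k ∈ Finset.Ico (j + 2) n, (n.choose k : ℂ) * d ^ (n - k)
          * ∑ r ∈ range N, (a + (r : ℂ) * d) ^ k
        = (n.choose (j + 2) : ℂ) * d ^ (n - (j + 2))
            * (∑ r ∈ range N, (a + (r : ℂ) * d) ^ (j + 2))
          + ∑ k ∈ Finset.Ico (j + 3) n, (n.choose k : ℂ) * d ^ (n - k)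
              * ∑ r ∈ range N, (a + (r : ℂ) * d) ^ k := by
      rw [Finset.sum_eq_sum_Ico_succ_bot (by omega : j + 2 < n)]
    rw [hj3, hsn, hsplit]
    have hd3 : d ^ (n - j - 3) * d = d ^ (n - (j + 2)) := by
      rw [← pow_succ]; congr 1; omega
    have hne : ((j : ℂ) + 3) ≠ 0 := by
      have h3 : ((j : ℂ) + 3) = ((j + 3 : ℕ) : ℂ) := by push_cast; ring
      rw [h3]
      exact_mod_cast (by omega : j + 3 ≠ 0)
    field_simp
    rw [← hd3]
    ring
  
theorem sum_powers_eq_S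
    (a d : ℂ) (hd : d ≠ 0) (N : ℕ) (hN : 0 < N) (n : ℕ) (hn : 4 ≤ n) :
    ∑ r ∈ Finset.range N, (a + (r : ℂ) * d) ^ (n - 1) =
      (1 / ((n : ℂ) * d)) * S a d N (n - 3) n := by
  rw [S_eq a d N (n - 3) n (by omega)]
  have h : Finset.Ico (n - 3 + 2) n = {n - 1} := by
    rw [show n - 3 + 2 = n - 1 by omega]
    ext x; simp only [Finset.mem_Ico, Finset.mem_singleton]; omega
  rw [h, Finset.sum_singleton]
  have hc : (n.choose (n - 1) : ℂ) = (n : ℂ) := by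
    rw [← Nat.choose_symm (by omega : n - 1 ≤ n), show n - (n - 1) = 1 by omega,
      Nat.choose_one_right]
  rw [hc, show n - (n - 1) = 1 by omega, pow_one]
  have hn0 : (n : ℂ) ≠ 0 := by exact_mod_cast (by omega : n ≠ 0)
  field_simp
  exact Finset.sum_congr rfl fun x _ => by ring
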